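/- Fix integers n ≥ 1, m ≥ 2 and real numbers p ∈ [0,1) and ϱ with 0 ≤ ϱ ≤ p and ϱ < 1, and set p̃ = (p − ϱ)/(1 − ϱ), so that p̃ < p and p = ϱ + (1−ϱ)p̃. Consider the two-stage model: with probability ϱ the example is easy-to-classify, in which case the correct class c* is the unique Plurality winner with certainty; with probability 1 − ϱ the n classifiers vote independently, each voting for c* with probability p̃/D̃ and for each of the other m−1 classes with probability (1−p̃)/D̃, where D̃ = p̃ + (m−1)(1−p̃). Then the probability that c* is the unique Plurality winner is at least (1 − ϱ)·T(p̃) + ϱ, where T(q) = (1/K(q)) Σ_{i=⌈n/m⌉}^{n} φ_i (n−i)! C(n,i) q^i (1−q)^{n−i}, φ_i is the coefficient of x^{n−i} in (Σ_{j=0}^{i−1} x^j/j!)^{m−1}, and K(q) = Σ_{j=0}^{n} C(n,j) q^j (m−1)^{n−j} (1−q)^{n−j}. -/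

import Mathlib

open Finset

/-- `phi n m i` is the coefficient of `x^(n-i)` in the expansion of the generating function
`G^m_i(x) = (∑_{j=0}^{i-1} x^j / j!)^(m-1)`. -/
noncomputable def phi (n m i : ℕ) : ℝ :=
  (((∑ j ∈ Finset.range i, Polynomial.C ((1 : ℝ) / (Nat.factorial j)) * Polynomial.X ^ j)) ^ (m - 1)).coeff (n - i)

/-- The normalization constant `K(q) = ∑_{j=0}^n C(n,j) q^j (m-1)^(n-j) (1-q)^(n-j)`. -/
noncomputable def Knorm (n m : ℕ) (q : ℝ) : ℝ :=
  ∑ j ∈ Finset.range (n + 1),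
    (n.choose j : ℝ) * q ^ j * ((m : ℝ) - 1) ^ (n - j) * (1 - q) ^ (n - j)

/-- `T(q) = (1/K(q)) ∑_{i=⌈n/m⌉}^n φ_i (n-i)! C(n,i) q^i (1-q)^(n-i)`. -/
noncomputable def Tprob (n m : ℕ) (q : ℝ) : ℝ :=
  (1 / Knorm n m q) *
    ∑ i ∈ Finset.Icc (⌈(n : ℚ) / (m : ℚ)⌉₊) n,
      phi n m i * ((n - i).factorial : ℝ) * (n.choose i : ℝ) * q ^ i * (1 - q) ^ (n - i)

/-- The set of voting profiles in which `cstar` receives strictly more votes than every other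
class, i.e. `cstar` is the unique Plurality winner. -/
def wins (n m : ℕ) (cstar : Fin m) : Finset (Fin n → Fin m) :=
  Finset.univ.filter (fun f => ∀ c : Fin m, c ≠ cstar →
    (Finset.univ.filter (fun v : Fin n => f v = c)).card <
      (Finset.univ.filter (fun v : Fin n => f v = cstar)).card)

def Ncount (γ : Type*) [Fintype γ] [DecidableEq γ] (r i : ℕ) : ℕ :=
  #(univ.filter fun g : γ → Fin r => ∀ c : Fin r, #(univ.filter fun x => g x = c) < i)

lemma fibcard_congr {γ γ' δ : Type*} [Fintype γ] [DecidableEq γ] [Fintype γ'] [DecidableEq γ']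
    [DecidableEq δ] (e : γ ≃ γ') (g : γ' → δ) (c : δ) :
    #(univ.filter fun x : γ => g (e x) = c) = #(univ.filter fun y : γ' => g y = c) :=
  Finset.card_equiv e (by simp)

lemma Ncount_congr {γ γ' : Type*} [Fintype γ] [DecidableEq γ] [Fintype γ'] [DecidableEq γ']
    (e : γ ≃ γ') (r i : ℕ) : Ncount γ r i = Ncount γ' r i := by
  unfold Ncount
  refine Finset.card_equiv (Equiv.arrowCongr e (Equiv.refl _)) fun g => ?_
  simp only [mem_filter, mem_univ, true_and, Equiv.arrowCongr_apply, Equiv.coe_refl,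
    Function.comp_apply, id_eq]
  refine forall_congr' fun c => ?_
  rw [fibcard_congr e.symm (fun x => g x) c]

lemma coeffP (i b : ℕ) :
    ((∑ j ∈ Finset.range i, Polynomial.C ((1:ℝ)/(Nat.factorial j)) * Polynomial.X ^ j).coeff b)
      = if b < i then (1:ℝ)/(Nat.factorial b) else 0 := by
  rw [Polynomial.finset_sum_coeff]
  simp only [Polynomial.coeff_C_mul, Polynomial.coeff_X_pow, mul_ite, mul_one, mul_zero]
  simp [Finset.sum_ite_eq' (Finset.range i) b]


-- card of fiber over castSucc c, restricted to subtype, equals full fiber card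
lemma card_fiber_subtype {γ : Type*} [Fintype γ] [DecidableEq γ] {r : ℕ} (s : Finset γ)
    (f : γ → Fin (r+1)) (hfib : (univ.filter fun x => f x = Fin.last r) = s) (c : Fin r) :
    #(univ.filter fun x : {x // x ∈ sᶜ} => f x.1 = c.castSucc)
      = #(univ.filter fun x : γ => f x = c.castSucc) := by
  apply Finset.card_bij (fun x _ => x.1)
  · intro x hx
    simp only [mem_filter, mem_univ, true_and] at hx ⊢
    exact hx
  · intro a _ b _ h; exact Subtype.ext h
  · intro x hx
    have hx' := (mem_filter.1 hx).2
    have hmem : x ∈ sᶜ := by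
      rw [mem_compl, ← hfib, mem_filter]
      push_neg
      intro _
      rw [hx']
      exact (Fin.castSucc_lt_last c).ne
    exact ⟨⟨x, hmem⟩, by simp [mem_filter, hx'], rfl⟩

lemma fiber_split {γ : Type*} [Fintype γ] [DecidableEq γ] (r i : ℕ) (s : Finset γ) :
    #(univ.filter fun g : γ → Fin (r+1) =>
        (univ.filter fun x => g x = Fin.last r) = s ∧
        ∀ c : Fin r, #(univ.filter fun x => g x = c.castSucc) < i)
      = Ncount {x // x ∈ sᶜ} r i := by
  classical
  set E : ({x // x ∈ sᶜ} → Fin r) → (γ → Fin (r+1)) :=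
    fun h x => if hx : x ∈ s then Fin.last r else (h ⟨x, by simp [hx]⟩).castSucc with hE
  have hEinj : Function.Injective E := by
    intro h₁ h₂ hh
    funext x
    have := congrFun hh x.1
    have hx : x.1 ∉ s := mem_compl.1 x.2
    simp only [hE, dif_neg hx] at this
    have := Fin.castSucc_injective _ this
    simpa [Subtype.coe_eta] using this
  have hset : (univ.filter fun g : γ → Fin (r+1) =>
        (univ.filter fun x => g x = Fin.last r) = s ∧
        ∀ c : Fin r, #(univ.filter fun x => g x = c.castSucc) < i)
      = (univ.filter fun h : {x // x ∈ sᶜ} → Fin r =>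
          ∀ c : Fin r, #(univ.filter fun x => h x = c) < i).image E := by
    ext f
    simp only [mem_filter, mem_univ, true_and, mem_image]
    constructor
    · rintro ⟨hfib, hcnt⟩
      have hne : ∀ x : {x // x ∈ sᶜ}, f x.1 ≠ Fin.last r := by
        intro x hx
        have hxs : (x.1 : γ) ∈ univ.filter (fun y => f y = Fin.last r) :=
          mem_filter.2 ⟨mem_univ _, hx⟩
        rw [hfib] at hxs
        exact (mem_compl.1 x.2) hxs
      refine ⟨fun x => (f x.1).castPred (hne x), fun c => ?_, ?_⟩
      · have heq : (univ.filter fun x : {x // x ∈ sᶜ} => (f x.1).castPred (hne x) = c)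
            = (univ.filter fun x : {x // x ∈ sᶜ} => f x.1 = c.castSucc) := by
          apply Finset.filter_congr
          intro x _
          simp [Fin.castPred_eq_iff_eq_castSucc]
        rw [heq, card_fiber_subtype s f hfib c]
        exact hcnt c
      · funext x
        by_cases hx : x ∈ s
        · rw [hE]
          simp only [dif_pos hx]
          have hxf : x ∈ univ.filter (fun y => f y = Fin.last r) := by rw [hfib]; exact hx
          rw [(mem_filter.1 hxf).2]
        · rw [hE]
          simp only [dif_neg hx]
          rw [Fin.castSucc_castPred]
    · rintro ⟨h, hh, rfl⟩
      have hfib : (univ.filter fun x => E h x = Fin.last r) = s := by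
        ext x
        simp only [mem_filter, mem_univ, true_and, hE]
        by_cases hx : x ∈ s
        · simp [dif_pos hx, hx]
        · simp only [dif_neg hx, hx, iff_false]
          exact (Fin.castSucc_lt_last _).ne
      refine ⟨hfib, fun c => ?_⟩
      rw [← card_fiber_subtype s (E h) hfib c]
      have heq : (univ.filter fun x : {x // x ∈ sᶜ} => E h x.1 = c.castSucc)
          = (univ.filter fun x : {x // x ∈ sᶜ} => h x = c) := by
        apply Finset.filter_congr
        intro x _
        have hx : x.1 ∉ s := mem_compl.1 x.2
        simp only [hE, dif_neg hx, Fin.castSucc_inj, Subtype.coe_eta]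
      rw [heq]
      exact hh c
  rw [hset, Finset.card_image_of_injective _ hEinj]
  rfl

lemma Ncount_fin (k r i : ℕ) {γ : Type*} [Fintype γ] [DecidableEq γ] (h : Fintype.card γ = k) :
    Ncount γ r i = Ncount (Fin k) r i :=
  Ncount_congr (Fintype.equivFinOfCardEq h) r i

lemma Ncount_succ (k r i : ℕ) :
    Ncount (Fin k) (r+1) i
      = ∑ b ∈ Finset.range (k+1), if b < i then k.choose b * Ncount (Fin (k-b)) r i else 0 := by
  classical
  rw [show Ncount (Fin k) (r+1) i
      = #(univ.filter fun g : Fin k → Fin (r+1) => ∀ c : Fin (r+1), #(univ.filter fun x => g x = c) < i)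
      from rfl]
  rw [Finset.card_eq_sum_card_fiberwise
    (f := fun g : Fin k → Fin (r+1) => univ.filter fun x => g x = Fin.last r)
    (t := (univ : Finset (Fin k)).powerset) (fun g _ => mem_powerset.2 (subset_univ _))]
  have hterm : ∀ s ∈ (univ : Finset (Fin k)).powerset,
      #((univ.filter fun g : Fin k → Fin (r+1) => ∀ c : Fin (r+1), #(univ.filter fun x => g x = c) < i).filter
          fun g => (univ.filter fun x => g x = Fin.last r) = s)
        = if #s < i then Ncount (Fin (k - #s)) r i else 0 := by
    intro s _
    by_cases hsi : #s < i
    · rw [if_pos hsi, Finset.filter_filter]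
      have hset : (univ.filter fun g : Fin k → Fin (r+1) =>
            (∀ c : Fin (r+1), #(univ.filter fun x => g x = c) < i) ∧
            (univ.filter fun x => g x = Fin.last r) = s)
          = (univ.filter fun g : Fin k → Fin (r+1) =>
            (univ.filter fun x => g x = Fin.last r) = s ∧
            ∀ c : Fin r, #(univ.filter fun x => g x = c.castSucc) < i) := by
        apply Finset.filter_congr
        intro g _
        constructor
        · rintro ⟨hall, hfib⟩
          exact ⟨hfib, fun c => hall c.castSucc⟩
        · rintro ⟨hfib, hall⟩
          refine ⟨fun c => ?_, hfib⟩
          rcases eq_or_ne c (Fin.last r) with rfl | hc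
          · rw [hfib]; exact hsi
          · obtain ⟨c', rfl⟩ := Fin.exists_castSucc_eq.mpr hc
            exact hall c'
      rw [hset, fiber_split r i s, Ncount_fin (k - #s)]
      simp [Finset.card_compl]
    · rw [if_neg hsi]
      rw [Finset.card_eq_zero, Finset.filter_filter, Finset.filter_eq_empty_iff]
      intro g _
      rintro ⟨hall, hfib⟩
      exact hsi (hfib ▸ hall (Fin.last r))
  rw [Finset.sum_congr rfl hterm]
  rw [Finset.sum_powerset (univ : Finset (Fin k)) (fun s => if #s < i then Ncount (Fin (k - #s)) r i else 0)]
  rw [Finset.card_univ, Fintype.card_fin]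
  apply Finset.sum_congr rfl
  intro j _
  rw [Finset.sum_powersetCard j univ (fun b => if b < i then Ncount (Fin (k-b)) r i else 0)]
  rw [Finset.card_univ, Fintype.card_fin, smul_eq_mul, mul_ite, mul_zero]

lemma egf (i r : ℕ) : ∀ k : ℕ,
    (k.factorial : ℝ) *
        ((∑ j ∈ Finset.range i, Polynomial.C ((1:ℝ)/(Nat.factorial j)) * Polynomial.X ^ j) ^ r).coeff k
      = (Ncount (Fin k) r i : ℝ) := by
  induction r with
  | zero =>
    intro k
    rw [pow_zero, Polynomial.coeff_one]
    cases k with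
    | zero => simp [Ncount]
    | succ k => simp [Ncount]
  | succ r ih =>
    intro k
    rw [pow_succ, Polynomial.coeff_mul, Finset.Nat.sum_antidiagonal_eq_sum_range_succ_mk,
      ← Finset.sum_range_reflect, Ncount_succ]
    push_cast [apply_ite (Nat.cast : ℕ → ℝ)]
    rw [Finset.mul_sum]
    apply Finset.sum_congr rfl
    intro b hb
    have hb' : b ≤ k := Nat.lt_succ_iff.mp (Finset.mem_range.1 hb)
    rw [Nat.sub_sub_self hb', coeffP]
    by_cases hbi : b < i
    · rw [if_pos hbi, if_pos hbi, ← ih (k - b)]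
      have hfact : (k.factorial : ℝ) = (k.choose b) * (b.factorial) * ((k-b).factorial) := by
        exact_mod_cast (Nat.choose_mul_factorial_mul_factorial hb').symm
      rw [hfact]
      have hbne : (b.factorial : ℝ) ≠ 0 := by positivity
      field_simp
    · simp [hbi]

lemma wins_last_card (n r i : ℕ) :
    #((wins n (r+1) (Fin.last r)).filter fun f => #(univ.filter fun v => f v = Fin.last r) = i)
      = n.choose i * Ncount (Fin (n - i)) r i := by
  classical
  rw [show (wins n (r+1) (Fin.last r)).filter (fun f => #(univ.filter fun v => f v = Fin.last r) = i)
      = univ.filter (fun f : Fin n → Fin (r+1) =>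
          (∀ c : Fin (r+1), c ≠ Fin.last r →
            #(univ.filter fun v => f v = c) < #(univ.filter fun v => f v = Fin.last r)) ∧
          #(univ.filter fun v => f v = Fin.last r) = i) from by
    simp [wins, Finset.filter_filter]]
  rw [Finset.card_eq_sum_card_fiberwise
    (f := fun f : Fin n → Fin (r+1) => univ.filter fun v => f v = Fin.last r)
    (t := Finset.powersetCard i (univ : Finset (Fin n)))
    (fun f hf => Finset.mem_powersetCard.2 ⟨subset_univ _, (mem_filter.1 hf).2.2⟩)]
  have hterm : ∀ s ∈ Finset.powersetCard i (univ : Finset (Fin n)),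
      #((univ.filter (fun f : Fin n → Fin (r+1) =>
          (∀ c : Fin (r+1), c ≠ Fin.last r →
            #(univ.filter fun v => f v = c) < #(univ.filter fun v => f v = Fin.last r)) ∧
          #(univ.filter fun v => f v = Fin.last r) = i)).filter
            fun f => (univ.filter fun v => f v = Fin.last r) = s)
        = Ncount (Fin (n - i)) r i := by
    intro s hs
    have hcard : #s = i := (Finset.mem_powersetCard.1 hs).2
    rw [Finset.filter_filter]
    have hset : (univ.filter fun f : Fin n → Fin (r+1) =>
          ((∀ c : Fin (r+1), c ≠ Fin.last r →
            #(univ.filter fun v => f v = c) < #(univ.filter fun v => f v = Fin.last r)) ∧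
          #(univ.filter fun v => f v = Fin.last r) = i) ∧
          (univ.filter fun v => f v = Fin.last r) = s)
        = (univ.filter fun f : Fin n → Fin (r+1) =>
            (univ.filter fun v => f v = Fin.last r) = s ∧
            ∀ c : Fin r, #(univ.filter fun v => f v = c.castSucc) < i) := by
      apply Finset.filter_congr
      intro f _
      constructor
      · rintro ⟨⟨hw, hci⟩, hfib⟩
        refine ⟨hfib, fun c => ?_⟩
        rw [← hci]
        exact hw c.castSucc (Fin.castSucc_lt_last c).ne
      · rintro ⟨hfib, hall⟩
        have hci : #(univ.filter fun v => f v = Fin.last r) = i := by rw [hfib, hcard]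
        refine ⟨⟨fun c hc => ?_, hci⟩, hfib⟩
        obtain ⟨c', rfl⟩ := Fin.exists_castSucc_eq.mpr hc
        rw [hci]
        exact hall c'
    rw [hset, fiber_split r i s, Ncount_fin (n - i)]
    simp [Finset.card_compl, hcard]
  rw [Finset.sum_congr rfl hterm, Finset.sum_const, Finset.card_powersetCard,
    Finset.card_univ, Fintype.card_fin, smul_eq_mul]

lemma wins_card (n r i : ℕ) (cstar : Fin (r+1)) :
    #((wins n (r+1) cstar).filter fun f => #(univ.filter fun v => f v = cstar) = i)
      = n.choose i * Ncount (Fin (n - i)) r i := by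
  classical
  rw [← wins_last_card n r i]
  set σ := Equiv.swap cstar (Fin.last r) with hσ
  apply Finset.card_equiv (Equiv.arrowCongr (Equiv.refl (Fin n)) σ)
  intro f
  have hfib : ∀ c : Fin (r+1),
      (univ.filter fun v => σ (f v) = c) = (univ.filter fun v => f v = σ.symm c) := by
    intro c
    apply Finset.filter_congr
    intro v _
    simp [Equiv.apply_eq_iff_eq_symm_apply]
  have hσs : ∀ c, σ.symm c = σ c := fun c => by rw [hσ, Equiv.symm_swap]
  have hlast : σ (Fin.last r) = cstar := Equiv.swap_apply_right _ _
  have hcst : σ cstar = Fin.last r := Equiv.swap_apply_left _ _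
  simp only [wins, mem_filter, mem_univ, true_and, Equiv.arrowCongr_apply, Equiv.refl_symm,
    Equiv.coe_refl, Function.comp_apply, id_eq, hfib, hσs, hlast]
  constructor
  · rintro ⟨hw, hc⟩
    exact ⟨fun c hc' => hw (σ c) fun h => hc' (σ.injective (h.trans hlast.symm)), hc⟩
  · rintro ⟨hw, hc⟩
    refine ⟨fun c hc' => ?_, hc⟩
    have h1 : σ c ≠ Fin.last r := fun h => hc' (by rw [← hlast, ← h, hσ, Equiv.swap_apply_self])
    have h2 := hw (σ c) h1
    rwa [hσ, Equiv.swap_apply_self] at h2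

/-- Two-stage model: with probability `ϱ` the example is easy-to-classify and `cstar` wins
with certainty; with probability `1 - ϱ` the `n` classifiers vote independently with accuracy
`p̃ = (p - ϱ)/(1 - ϱ)` (each voting for `cstar` with probability `p̃/D̃` and for each other
class with probability `(1-p̃)/D̃`, `D̃ = p̃ + (m-1)(1-p̃)`).  The probability that `cstar` is
the unique Plurality winner is at least `(1-ϱ)·T(p̃) + ϱ`. -/
theorem stmt13 (n m : ℕ) (hn : 1 ≤ n) (hm : 2 ≤ m)
    (p ϱ : ℝ) (hp0 : 0 ≤ p) (hp1 : p < 1) (hϱ0 : 0 ≤ ϱ) (hϱp : ϱ ≤ p) (hϱ1 : ϱ < 1)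
    (ptilde : ℝ) (hpt : ptilde = (p - ϱ) / (1 - ϱ))
    (cstar : Fin m) (Dtilde : ℝ) (hDt : Dtilde = ptilde + ((m : ℝ) - 1) * (1 - ptilde)) :
    (1 - ϱ) * Tprob n m ptilde + ϱ ≤
      ϱ + (1 - ϱ) *
        (∑ f ∈ wins n m cstar,
          ∏ v : Fin n, (if f v = cstar then ptilde / Dtilde else (1 - ptilde) / Dtilde)) := by
  classical
  obtain ⟨r, rfl⟩ : ∃ r, m = r + 1 := ⟨m - 1, by omega⟩
  have hr1 : 1 ≤ r := by omega
  set q := ptilde with hq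
  have h1ϱ : (0:ℝ) < 1 - ϱ := by linarith
  have hq0 : 0 ≤ q := by rw [hpt]; exact div_nonneg (by linarith) (by linarith)
  have hq1 : q < 1 := by rw [hpt, div_lt_one h1ϱ]; linarith
  have hrR : ((r:ℝ)) ≥ 1 := by exact_mod_cast hr1
  have hmR : (((r+1:ℕ)) : ℝ) - 1 = (r:ℝ) := by push_cast; ring
  have hD1 : (1:ℝ) ≤ Dtilde := by rw [hDt, hmR]; nlinarith
  have hD0 : (0:ℝ) < Dtilde := lt_of_lt_of_le one_pos hD1
  have hDn : (0:ℝ) < Dtilde ^ n := pow_pos hD0 n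
  -- Knorm = D^n
  have hK : Knorm n (r+1) q = Dtilde ^ n := by
    rw [hDt, add_pow]
    unfold Knorm
    apply Finset.sum_congr rfl
    intro j _
    rw [mul_pow]
    ring
  -- counts
  set cfun : (Fin n → Fin (r+1)) → ℕ := fun f => #(univ.filter fun v => f v = cstar) with hcfun
  set N : ℕ → ℕ := fun i => #((wins n (r+1) cstar).filter fun f => cfun f = i) with hN
  have hcle : ∀ f, cfun f ≤ n := by
    intro f
    rw [hcfun]
    exact le_trans (Finset.card_filter_le _ _) (by simp)
  have hprod : ∀ f : Fin n → Fin (r+1),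
      (∏ v, if f v = cstar then q / Dtilde else (1 - q) / Dtilde)
        = (q/Dtilde)^(cfun f) * ((1-q)/Dtilde)^(n - cfun f) := by
    intro f
    rw [Finset.prod_ite, Finset.prod_const, Finset.prod_const]
    congr 2
    have h1 := Finset.card_filter_add_card_filter_not
      (s := (univ : Finset (Fin n))) (p := fun v => f v = cstar)
    simp only [Finset.card_univ, Fintype.card_fin] at h1
    simp only [hcfun]
    omega
  have hS : (∑ f ∈ wins n (r+1) cstar,
        ∏ v, if f v = cstar then q / Dtilde else (1 - q) / Dtilde)
      = ∑ i ∈ Finset.range (n+1), (N i : ℝ) * ((q/Dtilde)^i * ((1-q)/Dtilde)^(n-i)) := by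
    rw [← Finset.sum_fiberwise_of_maps_to (g := cfun) (t := Finset.range (n+1))
      (fun f _ => Finset.mem_range.2 (Nat.lt_succ_of_le (hcle f)))]
    apply Finset.sum_congr rfl
    intro i _
    rw [Finset.sum_congr rfl (fun f hf => by
      rw [hprod f, (Finset.mem_filter.1 hf).2]), Finset.sum_const, nsmul_eq_mul]
  -- per-i simplification of the weight
  have hw : ∀ i ∈ Finset.range (n+1),
      (q/Dtilde)^i * ((1-q)/Dtilde)^(n-i) = (q^i * (1-q)^(n-i)) * (1 / Dtilde^n) := by
    intro i hi
    have hin : i ≤ n := Nat.lt_succ_iff.mp (Finset.mem_range.1 hi)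
    rw [div_pow, div_pow, div_mul_div_comm, ← pow_add, Nat.add_sub_cancel' hin]
    ring
  -- key termwise equality
  have hkey : ∀ i, i ≤ n →
      phi n (r+1) i * ((n-i).factorial : ℝ) * (n.choose i : ℝ) = (N i : ℝ) := by
    intro i hin
    have hik := egf i r (n - i)
    have hphi : phi n (r+1) i
        = ((∑ j ∈ Finset.range i, Polynomial.C ((1:ℝ)/(Nat.factorial j)) * Polynomial.X ^ j) ^ r).coeff (n - i) := by
      unfold phi
      norm_num
    rw [hN]
    simp only [hcfun]
    rw [wins_card n r i cstar]
    push_cast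
    rw [hphi, ← hik]
    ring
  -- sum inequality
  have hsub : Finset.Icc (⌈(n : ℚ) / ((r+1 : ℕ) : ℚ)⌉₊) n ⊆ Finset.range (n+1) := by
    intro i hi
    exact Finset.mem_range.2 (Nat.lt_succ_of_le (Finset.mem_Icc.1 hi).2)
  have hsum : (∑ i ∈ Finset.Icc (⌈(n : ℚ) / ((r+1 : ℕ) : ℚ)⌉₊) n,
        phi n (r+1) i * ((n-i).factorial : ℝ) * (n.choose i : ℝ) * q ^ i * (1-q)^(n-i))
      ≤ ∑ i ∈ Finset.range (n+1), (N i : ℝ) * (q^i * (1-q)^(n-i)) := by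
    rw [Finset.sum_congr rfl (fun i hi => by
      rw [show phi n (r+1) i * ((n-i).factorial : ℝ) * (n.choose i : ℝ) * q ^ i * (1-q)^(n-i)
          = (phi n (r+1) i * ((n-i).factorial : ℝ) * (n.choose i : ℝ)) * (q ^ i * (1-q)^(n-i)) from by ring,
        hkey i (Finset.mem_Icc.1 hi).2])]
    apply Finset.sum_le_sum_of_subset_of_nonneg hsub
    intro i _ _
    have : (0:ℝ) ≤ 1 - q := by linarith
    positivity
  -- conclude T ≤ S
  have hTS : Tprob n (r+1) q ≤ ∑ f ∈ wins n (r+1) cstar,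
      ∏ v, if f v = cstar then q / Dtilde else (1 - q) / Dtilde := by
    rw [hS, Finset.sum_congr rfl (fun i hi => by rw [hw i hi])]
    unfold Tprob
    rw [hK]
    have h2 : ∑ i ∈ Finset.range (n+1), (N i : ℝ) * (q^i * (1-q)^(n-i) * (1/Dtilde^n))
        = (1/Dtilde^n) * ∑ i ∈ Finset.range (n+1), (N i : ℝ) * (q^i * (1-q)^(n-i)) := by
      rw [Finset.mul_sum]
      apply Finset.sum_congr rfl
      intro i _
      ring
    rw [h2]
    apply mul_le_mul_of_nonneg_left hsum (by positivity)
  nlinarith [mul_le_mul_of_nonneg_left hTS h1ϱ.le]
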